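/- Let H > 0, I₂, I₀ be constants and suppose X, Y : ℝ → ℝ solve the conservative Ermakov system with these values of the first integrals H = (1/2)(X'²+Y'²) + N(u)/X², I₂ = 2TH - (XX'+YY'), I₀ = (1/2)(XY'-YX')² + (u²+1)N(u). Then r(T)² := X(T)² + Y(T)² satisfies r(T)² = (2HT - I₂)²/(2H) + I₀/H. -/

import Mathlib

/-- The radial solution formula r² = (2HT - I₂)²/(2H) + I₀/H for the
conservative Ermakov system. -/
theorem ermakov_radial_solution
    (N N' : ℝ → ℝ) (X Y X' Y' : ℝ → ℝ) (H I₂ I₀ : ℝ)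
    (hN : ∀ u, HasDerivAt N (N' u) u)
    (hX0 : ∀ T, X T ≠ 0)
    (hX : ∀ T, HasDerivAt X (X' T) T)
    (hY : ∀ T, HasDerivAt Y (Y' T) T)
    (hX' : ∀ T, HasDerivAt X'
      ((2 * N (Y T / X T) + (Y T / X T) * N' (Y T / X T)) / (X T)^3) T)
    (hY' : ∀ T, HasDerivAt Y' (-N' (Y T / X T) / (X T)^3) T)
    (hHpos : 0 < H)
    (hH : ∀ T, H = (1/2) * ((X' T)^2 + (Y' T)^2) + N (Y T / X T) / (X T)^2)
    (hI2 : ∀ T, I₂ = 2 * T * H - (X T * X' T + Y T * Y' T))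
    (hI0 : ∀ T, I₀ = (1/2) * (X T * Y' T - Y T * X' T)^2
        + ((Y T / X T)^2 + 1) * N (Y T / X T)) :
    ∀ T, X T^2 + Y T^2 = (2 * H * T - I₂)^2 / (2 * H) + I₀ / H := by
  intro T
  have hx := hX0 T
  have e2 : 2 * H * T - I₂ = X T * X' T + Y T * Y' T := by
    have := hI2 T; linarith
  have key : 2 * H * (X T ^ 2 + Y T ^ 2) = (2 * H * T - I₂) ^ 2 + 2 * I₀ := by
    rw [e2, hI0 T, hH T]
    field_simp
    ring
  have h2H : (2:ℝ) * H ≠ 0 := by positivity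
  field_simp
  linear_combination key
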